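/- Let Ω be a bounded open subset of ℝ² and let K₁, K₂: [0,1] → 𝒦(Ω̄) be two increasing functions such that K₁(s) ⊆ K₂(t) and K₂(s) ⊆ K₁(t) for every s, t ∈ [0,1] with s < t. Let Θ be the set of points t ∈ [0,1] such that K₁(t) = K₂(t). Then [0,1] \ Θ is at most countable. -/

import Mathlib

open MeasureTheory Filter Set
open scoped Classical

noncomputable section

/-- The plane `ℝ²`. -/
abbrev E2 : Type := EuclideanSpace ℝ (Fin 2)

/-- If `K₁, K₂ : [0,1] → 𝒦(closure Ω)` are increasing and interlaced
(`K₁(s) ⊆ K₂(t)` and `K₂(s) ⊆ K₁(t)` whenever `s < t`), then the set of times at which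
`K₁(t) ≠ K₂(t)` is at most countable. -/
theorem interlaced_increasing_countable (Ω : Set E2) (hΩo : IsOpen Ω)
    (hΩb : Bornology.IsBounded Ω)
    (K₁ K₂ : ℝ → Set E2)
    (hK₁ : ∀ t ∈ Set.Icc (0:ℝ) 1, IsCompact (K₁ t) ∧ K₁ t ⊆ closure Ω)
    (hK₂ : ∀ t ∈ Set.Icc (0:ℝ) 1, IsCompact (K₂ t) ∧ K₂ t ⊆ closure Ω)
    (hK₁mono : ∀ s ∈ Set.Icc (0:ℝ) 1, ∀ t ∈ Set.Icc (0:ℝ) 1, s ≤ t → K₁ s ⊆ K₁ t)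
    (hK₂mono : ∀ s ∈ Set.Icc (0:ℝ) 1, ∀ t ∈ Set.Icc (0:ℝ) 1, s ≤ t → K₂ s ⊆ K₂ t)
    (hcross : ∀ s ∈ Set.Icc (0:ℝ) 1, ∀ t ∈ Set.Icc (0:ℝ) 1, s < t →
      K₁ s ⊆ K₂ t ∧ K₂ s ⊆ K₁ t) :
    (Set.Icc (0:ℝ) 1 \ {t ∈ Set.Icc (0:ℝ) 1 | K₁ t = K₂ t}).Countable := by
  -- The bad set.
  set S : Set ℝ := Set.Icc (0:ℝ) 1 \ {t ∈ Set.Icc (0:ℝ) 1 | K₁ t = K₂ t} with hS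
  have hSmem : ∀ t ∈ S, t ∈ Set.Icc (0:ℝ) 1 ∧ K₁ t ≠ K₂ t := by
    intro t ht
    rcases ht with ⟨h1, h2⟩
    refine ⟨h1, fun h => h2 ⟨h1, h⟩⟩
  -- Key inclusion: for s < t in [0,1], K₁ s ∪ K₂ s ⊆ K₁ t ∩ K₂ t.
  have hBA : ∀ s ∈ Set.Icc (0:ℝ) 1, ∀ t ∈ Set.Icc (0:ℝ) 1, s < t →
      K₁ s ∪ K₂ s ⊆ K₁ t ∩ K₂ t := by
    intro s hs t ht hst
    rcases hcross s hs t ht hst with ⟨hc1, hc2⟩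
    have h1 := hK₁mono s hs t ht hst.le
    have h2 := hK₂mono s hs t ht hst.le
    rintro x (hx | hx)
    · exact ⟨h1 hx, hc1 hx⟩
    · exact ⟨hc2 hx, h2 hx⟩
  -- Choose a countable topological basis.
  obtain ⟨b, hbc, -, hb⟩ := TopologicalSpace.exists_countable_basis E2
  -- For each bad t, pick a point in the symmetric difference and a basic open set
  -- containing it, disjoint from K₁ t ∩ K₂ t.
  have hchoice : ∀ t ∈ S, ∃ U ∈ b, (U ∩ (K₁ t ∩ K₂ t) = ∅) ∧
      ∃ x ∈ U, x ∈ K₁ t ∪ K₂ t := by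
    intro t ht
    obtain ⟨ht01, hne⟩ := hSmem t ht
    have hcl : IsClosed (K₁ t ∩ K₂ t) :=
      ((hK₁ t ht01).1.isClosed).inter ((hK₂ t ht01).1.isClosed)
    -- pick x in the symmetric difference
    have : ∃ x, x ∈ (K₁ t ∪ K₂ t) ∧ x ∉ K₁ t ∩ K₂ t := by
      by_contra h
      push_neg at h
      apply hne
      ext x
      constructor
      · intro hx
        exact (h x (Or.inl hx)).2
      · intro hx
        exact (h x (Or.inr hx)).1
    obtain ⟨x, hxB, hxA⟩ := this
    have hxopen : x ∈ (K₁ t ∩ K₂ t)ᶜ := hxA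
    obtain ⟨U, hUb, hxU, hUsub⟩ := hb.exists_subset_of_mem_open hxopen hcl.isOpen_compl
    refine ⟨U, hUb, ?_, x, hxU, hxB⟩
    apply Set.eq_empty_of_forall_notMem
    rintro y ⟨hyU, hyA⟩
    exact (hUsub hyU) hyA
  choose! U hUb hUdisj x hxU hxB using hchoice
  -- t ↦ U t is injective on S.
  have hinj : Set.InjOn U S := by
    intro s hs t ht hUeq
    by_contra hne
    rcases lt_or_gt_of_ne hne with h | h
    · have hxA : x s ∈ K₁ t ∩ K₂ t :=
        hBA s (hSmem s hs).1 t (hSmem t ht).1 h (hxB s hs)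
      have : x s ∈ U t ∩ (K₁ t ∩ K₂ t) := ⟨hUeq ▸ hxU s hs, hxA⟩
      rw [hUdisj t ht] at this
      exact this
    · have hxA : x t ∈ K₁ s ∩ K₂ s :=
        hBA t (hSmem t ht).1 s (hSmem s hs).1 h (hxB t ht)
      have : x t ∈ U s ∩ (K₁ s ∩ K₂ s) := ⟨hUeq ▸ hxU t ht, hxA⟩
      rw [hUdisj s hs] at this
      exact this
  exact ((Set.mapsTo_image U S).countable_of_injOn hinj
    (hbc.mono (Set.image_subset_iff.2 hUb)))
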